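/- Let {s_k} be a nonnegative real sequence converging to 0, let ϑ ≥ 0 and α > 1, and suppose s_k^α ≤ ϑ(s_k − s_{k+1}) for all sufficiently large k. Then there exists ς > 0 such that s_k ≤ ς·k^{−1/(α−1)} for all sufficiently large k. -/

import Mathlib

open Filter

/-- Weighted AM-GM key inequality: for `x > 0` and `β > 0`,
`1 + β ≤ x ^ (-β) + β * x`. -/
lemma key_amgm (β x : ℝ) (hβ : 0 < β) (hx : 0 < x) :
    1 + β ≤ x ^ (-β) + β * x := by
  have hw₁ : (0:ℝ) ≤ 1 / (1 + β) := by positivity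
  have hw₂ : (0:ℝ) ≤ β / (1 + β) := by positivity
  have hp₁ : (0:ℝ) ≤ x ^ (-β) := Real.rpow_nonneg hx.le _
  have hsum : 1 / (1 + β) + β / (1 + β) = 1 := by
    field_simp
  have h := Real.geom_mean_le_arith_mean2_weighted hw₁ hw₂ hp₁ hx.le hsum
  have hgeom : (x ^ (-β)) ^ (1 / (1 + β)) * x ^ (β / (1 + β)) = 1 := by
    rw [← Real.rpow_mul hx.le, ← Real.rpow_add hx]
    rw [show -β * (1 / (1 + β)) + β / (1 + β) = 0 by ring, Real.rpow_zero]
  rw [hgeom] at h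
  have h1β : (0:ℝ) < 1 + β := by linarith
  have := mul_le_mul_of_nonneg_left h h1β.le
  calc 1 + β = (1 + β) * 1 := by ring
    _ ≤ (1 + β) * (1 / (1 + β) * x ^ (-β) + β / (1 + β) * x) := this
    _ = x ^ (-β) + β * x := by field_simp

theorem stmt_8 (s : ℕ → ℝ) (hs : ∀ k, 0 ≤ s k)
    (hlim : Tendsto s atTop (nhds 0)) (ϑ : ℝ) (hϑ : 0 ≤ ϑ)
    (α : ℝ) (hα : 1 < α)
    (hineq : ∃ N : ℕ, ∀ k ≥ N, s k ^ α ≤ ϑ * (s k - s (k + 1))) :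
    ∃ ς > (0:ℝ), ∃ K : ℕ, ∀ k ≥ K, s k ≤ ς * (k : ℝ) ^ (-(1 / (α - 1))) := by
  obtain ⟨N, hN⟩ := hineq
  set β := α - 1 with hβdef
  have hβ : 0 < β := by simp [hβdef]; linarith
  -- trivial case helper: if s is eventually 0
  have trivial_case : ∀ m : ℕ, (∀ k ≥ m, s k = 0) →
      ∃ ς > (0:ℝ), ∃ K : ℕ, ∀ k ≥ K, s k ≤ ς * (k : ℝ) ^ (-(1 / (α - 1))) := by
    intro m hm
    refine ⟨1, one_pos, m, fun k hk => ?_⟩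
    rw [hm k hk]
    positivity
  rcases eq_or_lt_of_le hϑ with hϑ0 | hϑpos
  · -- ϑ = 0 : s k = 0 for all k ≥ N
    apply trivial_case N
    intro k hk
    have h := hN k hk
    rw [← hϑ0] at h
    by_contra h0
    have hk' : 0 < s k := lt_of_le_of_ne (hs k) (Ne.symm h0)
    have : 0 < s k ^ α := Real.rpow_pos_of_pos hk' α
    simp at h; linarith
  by_cases hzero : ∃ m ≥ N, s m = 0
  · obtain ⟨m, hm, hsm⟩ := hzero
    apply trivial_case m
    intro k hk
    induction k, hk using Nat.le_induction with
    | base => exact hsm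
    | succ k hk ih =>
      have h := hN k (le_trans hm hk)
      rw [ih, Real.zero_rpow (by positivity)] at h
      have := hs (k + 1)
      nlinarith
  push_neg at hzero
  have hpos : ∀ k ≥ N, 0 < s k := fun k hk =>
    lt_of_le_of_ne (hs k) (Ne.symm (hzero k hk))
  -- key step: s (k+1) ^ (-β) ≥ s k ^ (-β) + β / ϑ for k ≥ N
  have step : ∀ k ≥ N, s k ^ (-β) + β / ϑ ≤ s (k + 1) ^ (-β) := by
    intro k hk
    have hk0 : 0 < s k := hpos k hk
    have hk1 : 0 < s (k + 1) := hpos (k + 1) (by omega)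
    have hx : 0 < s (k + 1) / s k := by positivity
    have h := key_amgm β _ hβ hx
    have hdiv : (s (k + 1) / s k) ^ (-β) = s (k + 1) ^ (-β) / s k ^ (-β) :=
      Real.div_rpow hk1.le hk0.le (-β)
    rw [hdiv] at h
    have hskβ : 0 < s k ^ (-β) := Real.rpow_pos_of_pos hk0 _
    -- multiply by s k ^ (-β)
    have h2 : (1 + β) * s k ^ (-β) ≤ s (k + 1) ^ (-β)
        + β * (s (k + 1) / s k) * s k ^ (-β) := by
      have := mul_le_mul_of_nonneg_right h hskβ.le
      calc (1 + β) * s k ^ (-β) ≤ (s (k + 1) ^ (-β) / s k ^ (-β) + β * (s (k + 1) / s k)) * s k ^ (-β) := this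
        _ = s (k + 1) ^ (-β) + β * (s (k + 1) / s k) * s k ^ (-β) := by
            field_simp
    -- the decrement bound
    have hdec : s k ^ α / ϑ ≤ s k - s (k + 1) := by
      rw [div_le_iff₀ hϑpos]
      linarith [hN k hk, mul_comm ϑ (s k - s (k + 1))]
    -- s k ^ (-β) * s k ^ α = s k
    have hcomb : s k ^ (-β) * s k ^ α = s k := by
      rw [← Real.rpow_add hk0, show -β + α = 1 by rw [hβdef]; ring, Real.rpow_one]
    -- β * (s k - s (k+1)) / s k * s k ^ (-β) ≥ β / ϑ
    have h3 : β / ϑ ≤ β * ((s k - s (k + 1)) / s k) * s k ^ (-β) := by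
      have key4 : β * (s k ^ α / ϑ / s k) * s k ^ (-β) = β / ϑ := by
        have e : β * (s k ^ α / ϑ / s k) * s k ^ (-β)
            = β / ϑ * (s k ^ (-β) * s k ^ α / s k) := by ring
        rw [e, hcomb, div_self hk0.ne', mul_one]
      rw [← key4]
      gcongr
    have hrw : β * (s (k + 1) / s k) * s k ^ (-β)
        = β * s k ^ (-β) - β * ((s k - s (k + 1)) / s k) * s k ^ (-β) := by
      field_simp; ring
    nlinarith [h2, h3]
  -- induction: s (N + n) ^ (-β) ≥ n * (β / ϑ)
  have ind : ∀ n : ℕ, (n : ℝ) * (β / ϑ) ≤ s (N + n) ^ (-β) := by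
    intro n
    induction n with
    | zero => simpa using Real.rpow_nonneg (hs N) (-β)
    | succ n ih =>
      have := step (N + n) (by omega)
      push_cast
      have : s (N + n) ^ (-β) + β / ϑ ≤ s (N + n + 1) ^ (-β) := this
      calc ((n : ℝ) + 1) * (β / ϑ) = n * (β / ϑ) + β / ϑ := by ring
        _ ≤ s (N + n) ^ (-β) + β / ϑ := by gcongr
        _ ≤ s (N + (n + 1)) ^ (-β) := by rw [show N + (n + 1) = N + n + 1 by ring]; exact this
  set c := β / (2 * ϑ) with hc
  have hcpos : 0 < c := by positivity
  refine ⟨c ^ (-(1 / β)), Real.rpow_pos_of_pos hcpos _, 2 * N + 2, fun k hk => ?_⟩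
  have hkN : N ≤ k := by omega
  have hkpos : (0:ℝ) < k := by
    have : (2:ℕ) ≤ k := by omega
    exact_mod_cast lt_of_lt_of_le (by norm_num) this
  -- lower bound on s k ^ (-β)
  have hlb : c * k ≤ s k ^ (-β) := by
    have h1 := ind (k - N)
    rw [show N + (k - N) = k by omega] at h1
    have h2 : ((k - N : ℕ) : ℝ) = (k : ℝ) - N := by
      push_cast [Nat.cast_sub hkN]; ring
    rw [h2] at h1
    have h3 : c * k ≤ ((k:ℝ) - N) * (β / ϑ) := by
      rw [hc]
      have hN2 : (N : ℝ) ≤ (k : ℝ) / 2 := by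
        have : (2 * N : ℕ) ≤ k := by omega
        have : ((2 * N : ℕ) : ℝ) ≤ k := by exact_mod_cast this
        push_cast at this; linarith
      have : (k : ℝ) / 2 ≤ (k : ℝ) - N := by linarith
      calc β / (2 * ϑ) * k = (k / 2) * (β / ϑ) := by field_simp
        _ ≤ ((k:ℝ) - N) * (β / ϑ) := by gcongr
    linarith
  have hsk : 0 < s k := hpos k hkN
  have hM : 0 < c * (k : ℝ) := by positivity
  -- invert
  have hfinal : s k ≤ (c * (k:ℝ)) ^ (-(1 / β)) := by
    have h4 : (s k ^ (-β)) ^ (-(1/β)) ≤ (c * (k:ℝ)) ^ (-(1/β)) :=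
      Real.rpow_le_rpow_of_nonpos hM hlb (by positivity |> neg_nonpos_of_nonneg)
    have h5 : (s k ^ (-β)) ^ (-(1/β)) = s k := by
      rw [← Real.rpow_mul hsk.le, show -β * -(1/β) = 1 by field_simp, Real.rpow_one]
    linarith [h4, h5.symm.le, h5.le]
  have hmul : (c * (k:ℝ)) ^ (-(1 / β)) = c ^ (-(1/β)) * (k:ℝ) ^ (-(1/β)) :=
    Real.mul_rpow hcpos.le hkpos.le
  calc s k ≤ (c * (k:ℝ)) ^ (-(1 / β)) := hfinal
    _ = c ^ (-(1/β)) * (k:ℝ) ^ (-(1/β)) := hmul
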